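/- arXiv:1512.09033 — 5 statements merged into one kernel-verified Lean document; each statement's English description precedes it below -/
import Mathlib

section
/- Let (u_n)_{n≥1} be a sequence of positive integers tending to infinity with n. Then ∑_{n=1}^∞ (-1)^{u_n} · F_{u_{n+1} - u_n} / (F_{u_n} · F_{u_{n+1}}) = (-1)^{u_1} / (F_{u_1} · Φ^{u_1}). -/
open Filter Finset Topology

/-- The golden ratio `Φ = (1 + √5)/2`. -/
noncomputable def Phi : ℝ := (1 + Real.sqrt 5) / 2

/-- The Fibonacci sequence extended to all integer indices via
`F_{-n} = (-1)^(n+1) F_n`. -/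
def fibZ (n : ℤ) : ℤ :=
  if 0 ≤ n then (Nat.fib n.toNat : ℤ) else (-1) ^ (n.natAbs + 1) * (Nat.fib n.natAbs : ℤ)

lemma key (d : ℕ) : ∀ a : ℕ, ((-1:ℤ))^a * Nat.fib d =
    Nat.fib (a+d) * Nat.fib (a+1) - Nat.fib (a+d+1) * Nat.fib a
  | 0 => by simp
  | a+1 => by
    have h1 : (Nat.fib (a+2):ℤ) = Nat.fib a + Nat.fib (a+1) := by
      exact_mod_cast (Nat.fib_add_two : Nat.fib (a+2) = _)
    have h2 : (Nat.fib (a+d+2):ℤ) = Nat.fib (a+d) + Nat.fib (a+d+1) := by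
      exact_mod_cast (Nat.fib_add_two : Nat.fib (a+d+2) = _)
    have ih := key d a
    have e1 : a+1+d = a+d+1 := by ring
    have e2 : a+d+1+1 = a+d+2 := by ring
    have e3 : a+1+1 = a+2 := rfl
    rw [e1, e2, e3, h1, h2]
    linear_combination (-1 : ℤ) * ih

lemma key2 (a b : ℕ) : fibZ ((b:ℤ) - a) * (-1)^a =
    Nat.fib b * Nat.fib (a+1) - Nat.fib (b+1) * Nat.fib a := by
  rcases le_or_gt a b with h | h
  · obtain ⟨d, rd⟩ := Nat.exists_eq_add_of_le h
    subst rd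
    have h0 : ((a + d : ℕ) : ℤ) - a = (d:ℤ) := by push_cast; ring
    rw [h0, fibZ, if_pos (by positivity)]
    simpa [mul_comm] using key d a
  · obtain ⟨c, rc⟩ := Nat.exists_eq_add_of_lt h
    subst rc
    have h0 : ((b:ℤ)) - ((b + c + 1 : ℕ) : ℤ) = -((c:ℤ)+1) := by push_cast; ring
    rw [h0, fibZ, if_neg (by omega)]
    have hna : ((-(((c:ℤ))+1))).natAbs = c + 1 := by
      simp [Int.natAbs_neg]
      omega
    rw [hna]
    have hk := key (c+1) b
    have e : b + (c+1) = b + c + 1 := by ring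
    rw [e] at hk
    have hp : ((-1:ℤ))^(c+1+1) * (-1)^(b+c+1) = -(-1:ℤ)^b := by
      rw [← pow_add]
      have e4 : c+1+1+(b+c+1) = 2*(c+1)+(b+1) := by ring
      rw [e4, pow_add, pow_mul]
      norm_num [pow_succ]
    linear_combination (Nat.fib (c+1):ℤ) * hp - hk

lemma term_eq (a b : ℕ) (ha : 1 ≤ a) (hb : 1 ≤ b) :
    (-1 : ℝ) ^ a * ((fibZ ((b:ℤ) - a) : ℝ) / ((Nat.fib a : ℝ) * (Nat.fib b : ℝ)))
      = (Nat.fib (a+1) : ℝ)/(Nat.fib a) - (Nat.fib (b+1) : ℝ)/(Nat.fib b) := by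
  have ha' : (Nat.fib a : ℝ) ≠ 0 := by
    exact_mod_cast (Nat.fib_pos.mpr ha).ne'
  have hb' : (Nat.fib b : ℝ) ≠ 0 := by
    exact_mod_cast (Nat.fib_pos.mpr hb).ne'
  have hkey : ((fibZ ((b:ℤ) - a) : ℝ)) * (-1)^a =
      (Nat.fib b : ℝ) * Nat.fib (a+1) - (Nat.fib (b+1) : ℝ) * Nat.fib a := by
    exact_mod_cast congrArg (fun z : ℤ => (z : ℝ)) (key2 a b)
  field_simp
  linear_combination hkey

lemma fib_tendsto : Tendsto (fun n => (Nat.fib n : ℝ)) atTop atTop := by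
  apply tendsto_natCast_atTop_atTop.comp
  apply tendsto_atTop_atTop_of_monotone Nat.fib_mono
  intro b
  exact ⟨b + 5, le_trans (by omega) (Nat.le_fib_self (by omega))⟩

open goldenRatio in
lemma ratio_tendsto : Tendsto (fun m => (Nat.fib (m+1) : ℝ)/(Nat.fib m)) atTop (𝓝 φ) := by
  have h1 : Tendsto (fun m : ℕ => ψ ^ m * ((Nat.fib m : ℝ))⁻¹) atTop (𝓝 0) := by
    simpa using (tendsto_pow_atTop_nhds_zero_of_abs_lt_one
      (by rw [abs_lt]; constructor <;> [exact Real.neg_one_lt_goldenConj; linarith [Real.goldenConj_neg]])).mul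
      (fib_tendsto.inv_tendsto_atTop)
  have h2 : ∀ᶠ m in atTop, (Nat.fib (m+1) : ℝ)/(Nat.fib m) = φ + ψ ^ m * ((Nat.fib m : ℝ))⁻¹ := by
    filter_upwards [eventually_ge_atTop 1] with m hm
    have hf : (Nat.fib m : ℝ) ≠ 0 := by exact_mod_cast (Nat.fib_pos.mpr hm).ne'
    have hc := Real.fib_succ_sub_goldenRatio_mul_fib m
    rw [div_eq_iff hf, add_mul, mul_assoc, inv_mul_cancel₀ hf, mul_one]
    linarith [hc]
  rw [Filter.tendsto_congr' h2]
  simpa using (tendsto_const_nhds : Tendsto (fun _ : ℕ => φ) atTop _).add h1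

open goldenRatio in
lemma final_value (n : ℕ) (hn : 1 ≤ n) :
    (-1 : ℝ) ^ n / ((Nat.fib n : ℝ) * Phi ^ n)
      = (Nat.fib (n+1) : ℝ)/(Nat.fib n) - φ := by
  have hf : (Nat.fib n : ℝ) ≠ 0 := by exact_mod_cast (Nat.fib_pos.mpr hn).ne'
  have hP : Phi = φ := rfl
  have h1 : (Nat.fib (n+1):ℝ)/Nat.fib n - φ = ψ^n / Nat.fib n := by
    rw [eq_div_iff hf, sub_mul, div_mul_cancel₀ _ hf]
    linarith [Real.fib_succ_sub_goldenRatio_mul_fib n]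
  have hψ : ψ = -φ⁻¹ := by rw [Real.inv_goldenRatio]; ring
  have h2 : ψ^n = (-1:ℝ)^n / φ^n := by
    rw [hψ, neg_pow, inv_pow, div_eq_mul_inv]
  rw [h1, h2, hP, div_div, mul_comm (φ^n)]

open goldenRatio in
/-- If `(u_n)_{n≥1}` is a sequence of positive integers tending to
infinity, then `∑_{n=1}^∞ (-1)^{u_n} F_{u_{n+1} - u_n} / (F_{u_n} F_{u_{n+1}})
= (-1)^{u_1} / (F_{u_1} Φ^{u_1})`. -/
theorem statement2 (u : ℕ → ℕ) (hupos : ∀ n, 1 ≤ n → 1 ≤ u n)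
    (hutend : Tendsto u atTop atTop) :
    Tendsto (fun N => ∑ n ∈ Finset.range N,
        (-1 : ℝ) ^ (u (n + 1)) *
          ((fibZ ((u (n + 2) : ℤ) - (u (n + 1) : ℤ)) : ℝ) /
            ((Nat.fib (u (n + 1)) : ℝ) * (Nat.fib (u (n + 2)) : ℝ))))
      atTop
      (𝓝 ((-1 : ℝ) ^ (u 1) / ((Nat.fib (u 1) : ℝ) * Phi ^ (u 1)))) := by
  set f : ℕ → ℝ := fun i => (Nat.fib (u (i+1) + 1) : ℝ)/(Nat.fib (u (i+1))) with hf
  have hsum : ∀ N, (∑ n ∈ Finset.range N,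
      (-1 : ℝ) ^ (u (n + 1)) *
        ((fibZ ((u (n + 2) : ℤ) - (u (n + 1) : ℤ)) : ℝ) /
          ((Nat.fib (u (n + 1)) : ℝ) * (Nat.fib (u (n + 2)) : ℝ)))) = f 0 - f N := by
    intro N
    rw [← Finset.sum_range_sub' f N]
    apply Finset.sum_congr rfl
    intro n _
    exact term_eq (u (n+1)) (u (n+2)) (hupos _ (by omega)) (hupos _ (by omega))
  have hftend : Tendsto f atTop (𝓝 φ) :=
    ratio_tendsto.comp (hutend.comp (tendsto_add_atTop_nat 1))
  have : Tendsto (fun N => f 0 - f N) atTop (𝓝 (f 0 - φ)) := tendsto_const_nhds.sub hftend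
  rw [funext hsum, final_value (u 1) (hupos 1 le_rfl)]
  exact this
end

section
/- Let (u_n)_{n≥1} be an increasing arithmetic sequence of positive integers with common difference r ≥ 1. Then ∑_{n=1}^∞ (-1)^{r(n-1)} / (F_{u_n} · F_{u_{n+1}}) = 1 / (F_r · F_{u_1} · Φ^{u_1}). -/
open Filter Finset Topology goldenRatio

lemma fib_prod_ge (n : ℕ) : 2 ^ n ≤ Nat.fib (n + 1) * Nat.fib (n + 2) := by
  induction n with
  | zero => simp
  | succ n ih =>
    have h1 : Nat.fib (n + 1) ≤ Nat.fib (n + 2) := Nat.fib_le_fib_succ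
    have h3 : Nat.fib (n + 3) = Nat.fib (n + 1) + Nat.fib (n + 2) := Nat.fib_add_two
    calc 2 ^ (n + 1) = 2 ^ n + 2 ^ n := by ring
    _ ≤ Nat.fib (n + 1) * Nat.fib (n + 2) + Nat.fib (n + 2) * Nat.fib (n + 2) := by
        exact Nat.add_le_add ih (le_trans ih (Nat.mul_le_mul_right _ h1))
    _ ≤ Nat.fib (n + 2) * Nat.fib (n + 3) := by rw [h3]; ring_nf; omega
  
lemma key_id (a r : ℕ) :
    (Nat.fib (a + r) : ℝ) * ψ ^ a - (Nat.fib a : ℝ) * ψ ^ (a + r)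
      = (-1) ^ a * (Nat.fib r : ℝ) := by
  have h5 : Real.sqrt 5 ≠ 0 := by positivity
  have hpw : φ ^ a * ψ ^ a = (-1 : ℝ) ^ a := by rw [← mul_pow, Real.goldenRatio_mul_goldenConj]
  rw [Real.coe_fib_eq, Real.coe_fib_eq, Real.coe_fib_eq, pow_add, pow_add, ← hpw]
  field_simp
  ring

/-- Let `(u_n)_{n≥1}` be an increasing arithmetic sequence of positive
integers with common difference `r ≥ 1`. Then
`∑_{n=1}^∞ (-1)^{r(n-1)} / (F_{u_n} F_{u_{n+1}}) = 1 / (F_r F_{u_1} Φ^{u_1})`. -/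
theorem statement4 (u : ℕ → ℕ) (r : ℕ) (hr : 1 ≤ r) (hu1 : 1 ≤ u 1)
    (harith : ∀ n, 1 ≤ n → u (n + 1) = u n + r) :
    ∑' n : ℕ, (-1 : ℝ) ^ (r * n) /
        ((Nat.fib (u (n + 1)) : ℝ) * (Nat.fib (u (n + 2)) : ℝ)) =
      1 / ((Nat.fib r : ℝ) * (Nat.fib (u 1) : ℝ) * Phi ^ (u 1)) := by
  set A : ℕ → ℕ := fun n => u 1 + n * r with hA
  have hAn : ∀ n, u (n + 1) = A n := by
    intro n
    induction n with
    | zero => simp [hA]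
    | succ n ih =>
      rw [harith (n + 1) (Nat.le_add_left 1 n), ih]
      simp [hA]; ring
  have hApos : ∀ n, 1 ≤ A n := fun n => le_trans hu1 (Nat.le_add_right _ _)
  have hfibA : ∀ n, (0 : ℝ) < (Nat.fib (A n) : ℝ) := by
    intro n
    exact_mod_cast Nat.fib_pos.mpr (hApos n)
  set c : ℕ → ℝ := fun n => ψ ^ (A n) / (Nat.fib (A n) : ℝ) with hc
  set f : ℕ → ℝ := fun n =>
    (-1 : ℝ) ^ (r * n) / ((Nat.fib (u (n + 1)) : ℝ) * (Nat.fib (u (n + 2)) : ℝ)) with hf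
  have hAstep : ∀ n, A (n + 1) = A n + r := by intro n; simp [hA]; ring
  -- pointwise identity
  have hstep : ∀ n, f n = ((-1 : ℝ) ^ (u 1) / (Nat.fib r : ℝ)) * (c n - c (n + 1)) := by
    intro n
    have ha := (hfibA n).ne'
    have hb := (hfibA (n + 1)).ne'
    have hcc : c n - c (n + 1)
        = ((-1) ^ (A n) * (Nat.fib r : ℝ)) / ((Nat.fib (A n) : ℝ) * (Nat.fib (A (n+1)) : ℝ)) := by
      rw [hc]
      rw [div_sub_div _ _ ha hb, hAstep n, ← key_id (A n) r]
      ring_nf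
    have hfr : (0:ℝ) < (Nat.fib r : ℝ) := by exact_mod_cast Nat.fib_pos.mpr hr
    simp only [hf]
    rw [hcc, hAn n, hAn (n+1)]
    simp only [hA]
    rw [pow_add, pow_mul]
    have h1 : ((-1:ℝ) ^ (u 1)) * ((-1:ℝ) ^ (u 1)) = 1 := by
      rw [← pow_add, ← two_mul, pow_mul]; norm_num
    field_simp
    rw [show ((-1:ℝ)) ^ (n * r) = (((-1:ℝ)) ^ r) ^ n by rw [mul_comm, pow_mul]]
    linear_combination (-(((-1:ℝ) ^ r) ^ n / (Nat.fib (u 1 + n * r) : ℝ))) * h1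
  -- summability
  have habs : ∀ n, |f n| ≤ (1/2 : ℝ) ^ n := by
    intro n
    have h1 : (2:ℝ) ^ n ≤ (Nat.fib (u (n+1)) : ℝ) * (Nat.fib (u (n+2)) : ℝ) := by
      have := fib_prod_ge n
      have m1 : Nat.fib (n + 1) ≤ Nat.fib (u (n + 1)) := by
        apply Nat.fib_mono; rw [hAn n]; simp [hA]
        have : n ≤ n * r := Nat.le_mul_of_pos_right n hr
        omega
      have m2 : Nat.fib (n + 2) ≤ Nat.fib (u (n + 2)) := by
        apply Nat.fib_mono; rw [hAn (n+1)]; simp [hA]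
        have : n + 1 ≤ (n + 1) * r := Nat.le_mul_of_pos_right (n+1) hr
        omega
      have m1' : (Nat.fib (n+1) : ℝ) ≤ (Nat.fib (u (n+1)) : ℝ) := by exact_mod_cast m1
      have m2' : (Nat.fib (n+2) : ℝ) ≤ (Nat.fib (u (n+2)) : ℝ) := by exact_mod_cast m2
      have h0 : (2:ℝ) ^ n ≤ (Nat.fib (n+1) : ℝ) * (Nat.fib (n+2) : ℝ) := by exact_mod_cast this
      exact le_trans h0 (mul_le_mul m1' m2' (by positivity) (by positivity))
    have hpos : (0:ℝ) < (Nat.fib (u (n+1)) : ℝ) * (Nat.fib (u (n+2)) : ℝ) :=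
      lt_of_lt_of_le (by positivity) h1
    simp only [hf]
    rw [abs_div, abs_pow, abs_neg, abs_one, one_pow, abs_of_pos hpos, div_pow, one_pow]
    rw [one_div, div_eq_mul_inv, one_mul]
    exact inv_anti₀ (by positivity) h1
  have hsum : Summable f := by
    apply Summable.of_abs
    apply Summable.of_nonneg_of_le (fun n => abs_nonneg _) habs
    exact summable_geometric_of_lt_one (by norm_num) (by norm_num)
  -- limit of c
  have hclim : Tendsto c atTop (𝓝 0) := by
    refine squeeze_zero_norm (a := fun n : ℕ => |ψ| ^ n) (f := c) (fun n => ?_) ?_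
    · have hψ1 : |ψ| ≤ 1 := by
        rw [abs_le]
        constructor
        · exact le_of_lt Real.neg_one_lt_goldenConj
        · linarith [Real.goldenConj_neg]
      have : ‖c n‖ = |ψ| ^ (A n) / (Nat.fib (A n) : ℝ) := by
        rw [hc]; rw [Real.norm_eq_abs, abs_div, abs_pow, abs_of_pos (hfibA n)]
      rw [this]
      have hfib1 : (1:ℝ) ≤ (Nat.fib (A n) : ℝ) := by
        exact_mod_cast Nat.fib_pos.mpr (hApos n)
      calc |ψ| ^ (A n) / (Nat.fib (A n) : ℝ) ≤ |ψ| ^ (A n) := by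
            apply div_le_self (by positivity) hfib1
      _ ≤ |ψ| ^ n := by
          apply pow_le_pow_of_le_one (abs_nonneg _) hψ1
          have : n ≤ n * r := Nat.le_mul_of_pos_right n hr
          simp [hA]; omega
    · apply tendsto_pow_atTop_nhds_zero_of_lt_one (abs_nonneg _)
      rw [abs_lt]
      constructor
      · linarith [Real.neg_one_lt_goldenConj, Real.goldenConj_neg]
      · linarith [Real.goldenConj_neg]
  -- telescoping
  have hpart : ∀ N, ∑ i ∈ Finset.range N, f i
      = ((-1 : ℝ) ^ (u 1) / (Nat.fib r : ℝ)) * (c 0 - c N) := by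
    intro N
    rw [← Finset.sum_range_sub' c N, Finset.mul_sum]
    exact Finset.sum_congr rfl fun i _ => hstep i
  have hlim1 : Tendsto (fun N => ∑ i ∈ Finset.range N, f i) atTop
      (𝓝 (((-1 : ℝ) ^ (u 1) / (Nat.fib r : ℝ)) * (c 0 - 0))) := by
    simp_rw [hpart]
    exact (tendsto_const_nhds.sub hclim).const_mul _
  have hlim2 := hsum.hasSum.tendsto_sum_nat
  have heq := tendsto_nhds_unique hlim2 hlim1
  rw [heq]
  -- final computation
  have hc0 : c 0 = ψ ^ (u 1) / (Nat.fib (u 1) : ℝ) := by simp [hc, hA]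
  have hPhi : Phi = φ := rfl
  have hinv : (-1 : ℝ) ^ (u 1) * ψ ^ (u 1) = (φ ^ (u 1))⁻¹ := by
    rw [← inv_pow, Real.inv_goldenRatio, ← mul_pow]; ring_nf
  have hfr : (0:ℝ) < (Nat.fib r : ℝ) := by exact_mod_cast Nat.fib_pos.mpr hr
  have hfu : (0:ℝ) < (Nat.fib (u 1) : ℝ) := by exact_mod_cast Nat.fib_pos.mpr hu1
  rw [hc0, hPhi, sub_zero, div_mul_div_comm, hinv]
  rw [one_div, div_eq_mul_inv, mul_inv]
  ring
end

section
/- Let (u_n)_{n≥1} be a sequence of positive integers tending to infinity with n, and let k be a positive integer. Then ∑_{n=1}^∞ (-1)^{u_n − n} · F_{u_{n+2k} − u_n} / (F_{u_n} · F_{u_{n+2k}}) = ∑_{n=1}^{k} (-1)^{u_{2n-1}+1} · F_{u_{2n} − u_{2n-1}} / (F_{u_{2n}} · F_{u_{2n-1}}). -/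
open Filter Finset Topology

lemma docagneNat (d b : ℕ) :
    (Nat.fib (b + d) : ℤ) * Nat.fib (b + 1) - Nat.fib (b + d + 1) * Nat.fib b
      = (-1) ^ b * Nat.fib d := by
  induction b with
  | zero => simp
  | succ b ih =>
      have fib1 : (Nat.fib (b + 1 + d) : ℤ) = Nat.fib (b + d + 1) := by
        rw [show b + 1 + d = b + d + 1 by ring]
      have fib2 : (Nat.fib (b + 1 + d + 1) : ℤ) = Nat.fib (b + d) + Nat.fib (b + d + 1) := by
        rw [show b + 1 + d + 1 = (b + d) + 2 by ring, Nat.fib_add_two]; push_cast; ring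
      have fib3 : (Nat.fib (b + 1 + 1) : ℤ) = Nat.fib b + Nat.fib (b + 1) := by
        rw [show b + 1 + 1 = b + 2 by ring, Nat.fib_add_two]; push_cast; ring
      rw [fib1, fib2, fib3]
      linear_combination -ih

lemma fibZ_sub (a b : ℕ) :
    fibZ ((a : ℤ) - b) = (-1) ^ b * ((Nat.fib a : ℤ) * Nat.fib (b + 1)
      - (Nat.fib (a + 1) : ℤ) * Nat.fib b) := by
  have hbb : ((-1 : ℤ)) ^ b * (-1 : ℤ) ^ b = 1 := by
    rw [← pow_add, ← two_mul, pow_mul]; norm_num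
  rcases le_or_gt b a with h | h
  · obtain ⟨d, rfl⟩ := Nat.exists_eq_add_of_le h
    have h0 : (0:ℤ) ≤ (b + d : ℕ) - b := by push_cast; omega
    have ht : (((b + d : ℕ) : ℤ) - b).toNat = d := by omega
    rw [fibZ, if_pos h0, ht, docagneNat d b, ← mul_assoc, hbb, one_mul]
  · obtain ⟨d, hd, rfl⟩ : ∃ d, 1 ≤ d ∧ b = a + d := ⟨b - a, by omega, by omega⟩
    have h0 : ¬ (0:ℤ) ≤ (a : ℤ) - (a + d : ℕ) := by push_cast; omega
    have ht : ((a : ℤ) - ((a + d : ℕ) : ℤ)).natAbs = d := by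
      have : (a : ℤ) - ((a + d : ℕ) : ℤ) = -d := by push_cast; ring
      rw [this]; simp
    rw [fibZ, if_neg h0, ht]
    have key := docagneNat d a
    have : (Nat.fib a : ℤ) * Nat.fib (a + d + 1) - Nat.fib (a + 1) * Nat.fib (a + d)
        = -((-1) ^ a * Nat.fib d) := by linarith [key]
    rw [this]
    have : ((-1 : ℤ)) ^ (a + d) * -((-1) ^ a * Nat.fib d)
        = (-1)^(2*a) * (-1)^(d+1) * Nat.fib d := by ring
    rw [this]
    simp [pow_mul]

lemma key_real (a b : ℕ) (ha : 1 ≤ a) (hb : 1 ≤ b) :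
    ((fibZ ((a : ℤ) - b) : ℤ) : ℝ) / ((Nat.fib b : ℝ) * (Nat.fib a : ℝ))
      = (-1) ^ b * ((Nat.fib (b + 1) : ℝ) / Nat.fib b - (Nat.fib (a + 1) : ℝ) / Nat.fib a) := by
  have hfa : (0:ℝ) < Nat.fib a := by exact_mod_cast Nat.fib_pos.2 ha
  have hfb : (0:ℝ) < Nat.fib b := by exact_mod_cast Nat.fib_pos.2 hb
  rw [fibZ_sub]
  push_cast
  field_simp

/-- fib ratio tends to the golden ratio. -/
lemma fib_ratio_tendsto :
    Tendsto (fun m : ℕ => (Nat.fib (m + 1) : ℝ) / Nat.fib m) atTop (𝓝 Real.goldenRatio) := by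
  have hψ : |Real.goldenConj| < 1 := by
    rw [abs_lt]; constructor
    · exact Real.neg_one_lt_goldenConj
    · linarith [Real.goldenConj_neg]
  have hpow : Tendsto (fun n : ℕ => Real.goldenConj ^ n) atTop (𝓝 0) :=
    tendsto_pow_atTop_nhds_zero_of_abs_lt_one hψ
  have hdiff : Tendsto (fun m : ℕ => (Nat.fib (m + 1) : ℝ) / Nat.fib m - Real.goldenRatio)
      atTop (𝓝 0) := by
    apply squeeze_zero_norm' (a := fun n : ℕ => ‖Real.goldenConj ^ n‖)
    · filter_upwards [eventually_ge_atTop 1] with m hm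
      have hfm : (1:ℝ) ≤ Nat.fib m := by exact_mod_cast Nat.fib_pos.2 hm
      have hbinet := Real.fib_succ_sub_goldenRatio_mul_fib m
      have : (Nat.fib (m + 1) : ℝ) / Nat.fib m - Real.goldenRatio = Real.goldenConj ^ m / Nat.fib m := by
        rw [← hbinet]; field_simp
      rw [this, norm_div]
      calc ‖Real.goldenConj ^ m‖ / ‖(Nat.fib m : ℝ)‖ ≤ ‖Real.goldenConj ^ m‖ / 1 := by
            apply div_le_div_of_nonneg_left (norm_nonneg _) one_pos
            rw [Real.norm_eq_abs, abs_of_pos (by linarith)]; linarith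
        _ = ‖Real.goldenConj ^ m‖ := by rw [div_one]
    · simpa using hpow.norm
  have := hdiff.add_const Real.goldenRatio
  simpa using this

lemma sum_range_two_mul (f : ℕ → ℝ) (k : ℕ) :
    ∑ i ∈ Finset.range (2 * k), f i = ∑ j ∈ Finset.range k, (f (2 * j) + f (2 * j + 1)) := by
  induction k with
  | zero => simp
  | succ k ih =>
      have : 2 * (k + 1) = (2 * k) + 1 + 1 := by ring
      rw [this, Finset.sum_range_succ, Finset.sum_range_succ, ih, Finset.sum_range_succ]
      ring

/-- Let `(u_n)_{n≥1}` be a sequence of positive integers tending to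
infinity and `k ≥ 1`. Then
`∑_{n=1}^∞ (-1)^{u_n - n} F_{u_{n+2k} - u_n} / (F_{u_n} F_{u_{n+2k}})
= ∑_{n=1}^k (-1)^{u_{2n-1}+1} F_{u_{2n} - u_{2n-1}} / (F_{u_{2n}} F_{u_{2n-1}})`. -/
theorem statement10 (u : ℕ → ℕ) (hupos : ∀ n, 1 ≤ n → 1 ≤ u n)
    (hutend : Tendsto u atTop atTop) (k : ℕ) (hk : 1 ≤ k) :
    Tendsto (fun N => ∑ n ∈ Finset.range N,
        (-1 : ℝ) ^ ((u (n + 1) : ℤ) - ((n : ℤ) + 1)) *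
          ((fibZ ((u (n + 1 + 2 * k) : ℤ) - (u (n + 1) : ℤ)) : ℝ) /
            ((Nat.fib (u (n + 1)) : ℝ) * (Nat.fib (u (n + 1 + 2 * k)) : ℝ))))
      atTop
      (𝓝 (∑ n ∈ Finset.range k,
        (-1 : ℝ) ^ (u (2 * n + 1) + 1) *
          ((fibZ ((u (2 * n + 2) : ℤ) - (u (2 * n + 1) : ℤ)) : ℝ) /
            ((Nat.fib (u (2 * n + 2)) : ℝ) * (Nat.fib (u (2 * n + 1)) : ℝ))))) := by
  classical
  set g : ℕ → ℝ := fun n => (Nat.fib (u n + 1) : ℝ) / Nat.fib (u n) with hg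
  set x : ℕ → ℝ := fun m => (-1 : ℝ) ^ (m + 1) * g (m + 1) with hx
  -- Step 1: each summand equals x n - x (n + 2*k)
  have hsummand : ∀ n : ℕ,
      (-1 : ℝ) ^ ((u (n + 1) : ℤ) - ((n : ℤ) + 1)) *
          ((fibZ ((u (n + 1 + 2 * k) : ℤ) - (u (n + 1) : ℤ)) : ℝ) /
            ((Nat.fib (u (n + 1)) : ℝ) * (Nat.fib (u (n + 1 + 2 * k)) : ℝ)))
        = x n - x (n + 2 * k) := by
    intro n
    have hb := hupos (n + 1) (by omega)
    have ha := hupos (n + 1 + 2 * k) (by omega)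
    have hkey := key_real (u (n + 1 + 2 * k)) (u (n + 1)) ha hb
    have hzpow : (-1 : ℝ) ^ ((u (n + 1) : ℤ) - ((n : ℤ) + 1))
        = (-1 : ℝ) ^ (u (n + 1)) * (-1 : ℝ) ^ (n + 1) := by
      rw [show ((u (n + 1) : ℤ) - ((n : ℤ) + 1)) = (u (n + 1) : ℤ) - ((n + 1 : ℕ) : ℤ) by
        push_cast; ring]
      rw [zpow_sub₀ (by norm_num : (-1:ℝ) ≠ 0), zpow_natCast, zpow_natCast]
      rw [div_eq_mul_inv, ← inv_pow]
      norm_num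
    rw [hzpow, hkey, hx, hg]
    simp only []
    rw [show n + 2 * k + 1 = n + 1 + 2 * k by ring]
    rw [show ((-1:ℝ)) ^ (n + 1 + 2 * k) = (-1 : ℝ) ^ (n + 1) by
      rw [pow_add, pow_mul]; norm_num]
    rcases Nat.even_or_odd (u (n + 1)) with he | ho
    · rw [he.neg_one_pow]; ring
    · rw [ho.neg_one_pow]; ring
  -- Step 2: the target equals ∑ i < 2k, x i
  have htarget : (∑ n ∈ Finset.range k,
      (-1 : ℝ) ^ (u (2 * n + 1) + 1) *
        ((fibZ ((u (2 * n + 2) : ℤ) - (u (2 * n + 1) : ℤ)) : ℝ) /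
          ((Nat.fib (u (2 * n + 2)) : ℝ) * (Nat.fib (u (2 * n + 1)) : ℝ))))
      = ∑ i ∈ Finset.range (2 * k), x i := by
    rw [sum_range_two_mul]
    apply Finset.sum_congr rfl
    intro n _
    have hb := hupos (2 * n + 1) (by omega)
    have ha := hupos (2 * n + 2) (by omega)
    have hkey := key_real (u (2 * n + 2)) (u (2 * n + 1)) ha hb
    have hcomm : (Nat.fib (u (2 * n + 2)) : ℝ) * (Nat.fib (u (2 * n + 1)) : ℝ)
        = (Nat.fib (u (2 * n + 1)) : ℝ) * (Nat.fib (u (2 * n + 2)) : ℝ) := by ring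
    rw [hcomm, hkey, hx, hg]
    simp only []
    rw [show 2 * n + 1 + 1 = 2 * n + 2 by ring]
    rw [show ((-1:ℝ)) ^ (2 * n + 1) = -1 by
      rw [pow_succ, pow_mul]; norm_num]
    rw [show ((-1:ℝ)) ^ (2 * n + 2) = 1 by
      rw [show 2 * n + 2 = 2 * (n + 1) by ring, pow_mul]; norm_num]
    rw [pow_succ]
    rcases Nat.even_or_odd (u (2 * n + 1)) with he | ho
    · rw [he.neg_one_pow]; ring
    · rw [ho.neg_one_pow]; ring
  -- Step 3: partial sums telescope
  have hpartial : ∀ N : ℕ,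
      (∑ n ∈ Finset.range N, (x n - x (n + 2 * k)))
        = (∑ i ∈ Finset.range (2 * k), x i) - ∑ i ∈ Finset.range (2 * k), x (N + i) := by
    intro N
    rw [Finset.sum_sub_distrib]
    have h1 : ∑ n ∈ Finset.range N, x (n + 2 * k)
        = ∑ n ∈ Finset.range (2 * k + N), x n - ∑ i ∈ Finset.range (2 * k), x i := by
      rw [Finset.sum_range_add]
      simp [add_comm]
    have h2 : ∑ n ∈ Finset.range (2 * k + N), x n
        = ∑ n ∈ Finset.range N, x n + ∑ i ∈ Finset.range (2 * k), x (N + i) := by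
      rw [show 2 * k + N = N + 2 * k by ring, Finset.sum_range_add]
    rw [h1, h2]
    ring
  -- Step 4: limit of the tail
  have hgφ : Tendsto g atTop (𝓝 Real.goldenRatio) := fib_ratio_tendsto.comp hutend
  have htail : Tendsto (fun N => ∑ i ∈ Finset.range (2 * k), x (N + i)) atTop (𝓝 0) := by
    have hh : Tendsto (fun N => ∑ i ∈ Finset.range (2 * k), (-1:ℝ) ^ i * g (N + (i + 1)))
        atTop (𝓝 (∑ i ∈ Finset.range (2 * k), (-1:ℝ) ^ i * Real.goldenRatio)) := by
      apply tendsto_finset_sum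
      intro i _
      exact (hgφ.comp (tendsto_add_atTop_nat (i + 1))).const_mul _
    have hzero : (∑ i ∈ Finset.range (2 * k), (-1:ℝ) ^ i * Real.goldenRatio) = 0 := by
      rw [← Finset.sum_mul, neg_one_geom_sum, if_pos ⟨k, two_mul k⟩, zero_mul]
    rw [hzero] at hh
    apply squeeze_zero_norm'
      (a := fun N => ‖∑ i ∈ Finset.range (2 * k), (-1:ℝ) ^ i * g (N + (i + 1))‖)
    · filter_upwards with N
      have heq : ∑ i ∈ Finset.range (2 * k), x (N + i)
          = (-1:ℝ) ^ (N + 1) * ∑ i ∈ Finset.range (2 * k), (-1:ℝ) ^ i * g (N + (i + 1)) := by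
        rw [Finset.mul_sum]
        apply Finset.sum_congr rfl
        intro i _
        rw [hx]
        simp only []
        rw [show N + i + 1 = N + (i + 1) by ring, show N + (i + 1) = (N + 1) + i by ring,
          pow_add]
        rw [show (N + 1) + i = N + (i + 1) by ring]
        ring
      rw [heq, norm_mul]
      have : ‖((-1:ℝ)) ^ (N + 1)‖ = 1 := by
        rw [norm_pow, norm_neg, norm_one, one_pow]
      rw [this, one_mul]
    · simpa using hh.norm
  -- Conclude
  have hfinal : Tendsto (fun N => (∑ i ∈ Finset.range (2 * k), x i)
      - ∑ i ∈ Finset.range (2 * k), x (N + i)) atTop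
      (𝓝 ((∑ i ∈ Finset.range (2 * k), x i) - 0)) :=
    tendsto_const_nhds.sub htail
  rw [sub_zero] at hfinal
  rw [htarget]
  apply hfinal.congr
  intro N
  rw [← hpartial]
  apply Finset.sum_congr rfl
  intro n _
  exact (hsummand n).symm
end

section
/- Let (u_n)_{n≥1} be an increasing arithmetic sequence of positive integers with common difference r ≥ 1. Then for any positive integer k: ∑_{n=1}^∞ (-1)^{(r-1)(n-1)} / (F_{u_n} · F_{u_{n+2k}}) = (F_r / F_{2kr}) · ∑_{n=1}^{k} 1 / (F_{u_{2n}} · F_{u_{2n-1}}). -/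
open Filter Finset Topology

private lemma vajda' (a i j : ℕ) :
    (Nat.fib (a + i) : ℝ) * Nat.fib (a + j) - Nat.fib a * Nat.fib (a + i + j)
      = (-1) ^ a * Nat.fib i * Nat.fib j := by
  have hPQ : Real.goldenRatio ^ a * Real.goldenConj ^ a = (-1:ℝ) ^ a := by
    rw [← mul_pow, Real.goldenRatio_mul_goldenConj]
  have h5ne : Real.sqrt 5 ≠ 0 := by positivity
  simp only [Real.coe_fib_eq, pow_add]
  generalize Real.goldenRatio ^ a = A at hPQ ⊢
  generalize Real.goldenConj ^ a = B at hPQ ⊢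
  generalize Real.goldenRatio ^ i = X1 at *
  generalize Real.goldenConj ^ i = Y1 at *
  generalize Real.goldenRatio ^ j = X2 at *
  generalize Real.goldenConj ^ j = Y2 at *
  field_simp
  linear_combination ((X1 - Y1) * (X2 - Y2)) * hPQ

private lemma fibdiff (a c : ℕ) (ha : 1 ≤ a) :
    (Nat.fib (a + 1) : ℝ) / Nat.fib a - (Nat.fib (a + c + 1) : ℝ) / Nat.fib (a + c)
      = (-1) ^ a * Nat.fib c / (Nat.fib a * Nat.fib (a + c)) := by
  have h1 : (Nat.fib a : ℝ) ≠ 0 := by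
    have : 0 < Nat.fib a := Nat.fib_pos.mpr ha
    exact_mod_cast this.ne'
  have h2 : (Nat.fib (a + c) : ℝ) ≠ 0 := by
    have : 0 < Nat.fib (a + c) := Nat.fib_pos.mpr (by omega)
    exact_mod_cast this.ne'
  have V := vajda' a 1 c
  rw [Nat.fib_one] at V
  rw [show a + 1 + c = a + c + 1 by omega] at V
  field_simp
  linear_combination V

private lemma fib_lb : ∀ n : ℕ, (3/2 : ℝ) ^ n ≤ Nat.fib (n + 2)
  | 0 => by norm_num [show Nat.fib 2 = 1 from rfl]
  | 1 => by norm_num [show Nat.fib 3 = 2 from rfl]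
  | (n+2) => by
    have h1 := fib_lb n
    have h2 := fib_lb (n+1)
    have hf : Nat.fib (n + 4) = Nat.fib (n + 2) + Nat.fib (n + 3) := Nat.fib_add_two
    have hp : (0:ℝ) < (3/2:ℝ)^n := by positivity
    push_cast [hf]
    calc (3/2 : ℝ) ^ (n + 2) = (3/2)^n * (9/4) := by ring
      _ ≤ (3/2)^n + (3/2)^(n+1) := by rw [pow_succ]; nlinarith
      _ ≤ (Nat.fib (n+2) : ℝ) + Nat.fib (n+3) := by linarith

private lemma negpow_two_mul (m : ℕ) : ((-1:ℝ)) ^ (2 * m) = 1 := by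
  rw [pow_mul]; norm_num

private lemma pair_sum (v : ℕ → ℝ) (k : ℕ) :
    ∑ n ∈ range (2 * k), v n = ∑ j ∈ range k, (v (2 * j) + v (2 * j + 1)) := by
  induction k with
  | zero => simp
  | succ k ih =>
    rw [show 2 * (k + 1) = (2 * k + 1) + 1 by ring, Finset.sum_range_succ,
      Finset.sum_range_succ, ih, Finset.sum_range_succ]
    ring

private lemma tele_sum (w : ℕ → ℝ) (m N : ℕ) :
    ∑ n ∈ range N, (w n - w (n + m)) =
      ∑ n ∈ range m, w n - ∑ n ∈ range m, w (N + n) := by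
  have h1 : ∑ n ∈ range N, w (n + m) = ∑ n ∈ range (m + N), w n - ∑ n ∈ range m, w n := by
    rw [Finset.sum_range_add]
    simp [add_comm]
  have h2 : ∑ n ∈ range (N + m), w n = ∑ n ∈ range N, w n + ∑ n ∈ range m, w (N + n) :=
    Finset.sum_range_add w N m
  rw [Finset.sum_sub_distrib, h1, add_comm m N, h2]
  ring

/-- Let `(u_n)_{n≥1}` be an increasing arithmetic sequence of positive
integers with common difference `r ≥ 1`. Then for any positive integer `k`:
`∑_{n=1}^∞ (-1)^{(r-1)(n-1)} / (F_{u_n} F_{u_{n+2k}})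
= (F_r / F_{2kr}) ∑_{n=1}^k 1 / (F_{u_{2n}} F_{u_{2n-1}})`. -/
theorem statement12 (u : ℕ → ℕ) (r : ℕ) (hr : 1 ≤ r) (hu1 : 1 ≤ u 1)
    (harith : ∀ n, 1 ≤ n → u (n + 1) = u n + r) (k : ℕ) (hk : 1 ≤ k) :
    ∑' n : ℕ, (-1 : ℝ) ^ ((r - 1) * n) /
        ((Nat.fib (u (n + 1)) : ℝ) * (Nat.fib (u (n + 1 + 2 * k)) : ℝ)) =
      ((Nat.fib r : ℝ) / (Nat.fib (2 * k * r) : ℝ)) *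
        ∑ n ∈ Finset.range k,
          1 / ((Nat.fib (u (2 * n + 2)) : ℝ) * (Nat.fib (u (2 * n + 1)) : ℝ)) := by
  have huu : ∀ m : ℕ, u (m + 1) = u 1 + m * r := by
    intro m
    induction m with
    | zero => simp
    | succ m ih => rw [harith (m + 1) (by omega), ih]; ring
  have hge : ∀ m : ℕ, m + 1 ≤ u (m + 1) := by
    intro m; rw [huu m]; nlinarith
  have hfibpos : ∀ m : ℕ, (0:ℝ) < Nat.fib (u (m + 1)) := by
    intro m
    have : 0 < Nat.fib (u (m + 1)) := Nat.fib_pos.mpr (by have := hge m; omega)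
    exact_mod_cast this
  set h : ℕ → ℝ := fun n => (Nat.fib (u (n + 1) + 1) : ℝ) / Nat.fib (u (n + 1)) with hh
  set f : ℕ → ℝ := fun n => (-1 : ℝ) ^ ((r - 1) * n) /
      ((Nat.fib (u (n + 1)) : ℝ) * (Nat.fib (u (n + 1 + 2 * k)) : ℝ)) with hf
  set w : ℕ → ℝ := fun n => (-1 : ℝ) ^ n * h n with hw
  have hshift : ∀ n : ℕ, u (n + 1 + 2 * k) = u (n + 1) + 2 * k * r := by
    intro n
    rw [huu, show n + 1 + 2 * k = (n + 2 * k) + 1 by ring, huu]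
    ring
  have hkr : 1 ≤ 2 * k * r := Nat.one_le_iff_ne_zero.mpr (by positivity)
  have hfib2kr : (0:ℝ) < Nat.fib (2 * k * r) := by
    exact_mod_cast Nat.fib_pos.mpr hkr
  set C : ℝ := (-1 : ℝ) ^ (u 1) / Nat.fib (2 * k * r) with hC
  -- telescoping form of f
  have hfw : ∀ n : ℕ, f n = C * (w n - w (n + 2 * k)) := by
    intro n
    have hd := fibdiff (u (n + 1)) (2 * k * r) (by have := hge n; omega)
    have hwn : w n - w (n + 2 * k) = (-1 : ℝ) ^ n * (h n - h (n + 2 * k)) := by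
      simp only [hw]
      rw [pow_add, negpow_two_mul]
      ring
    have hh2 : h (n + 2 * k) = (Nat.fib (u (n + 1) + 2 * k * r + 1) : ℝ) /
        Nat.fib (u (n + 1) + 2 * k * r) := by
      simp only [hh]
      rw [show n + 2 * k + 1 = n + 1 + 2 * k by ring, hshift n]
    have hdiff : h n - h (n + 2 * k) =
        (-1 : ℝ) ^ (u (n + 1)) * Nat.fib (2 * k * r) /
          (Nat.fib (u (n + 1)) * Nat.fib (u (n + 1) + 2 * k * r)) := by
      rw [hh2]; simp only [hh]; exact hd
    rw [hwn, hdiff]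
    simp only [hf, hC]
    rw [hshift n]
    have hsign : (-1:ℝ) ^ (u 1) * ((-1:ℝ) ^ n * (-1:ℝ) ^ (u (n + 1)))
        = (-1:ℝ) ^ ((r - 1) * n) := by
      rw [huu n, ← pow_add, ← pow_add]
      obtain ⟨r', rfl⟩ : ∃ r', r = r' + 1 := ⟨r - 1, by omega⟩
      rw [show u 1 + (n + (u 1 + n * (r' + 1))) = (r' + 1 - 1) * n + 2 * (u 1 + n) by
        simp only [Nat.add_sub_cancel]; ring]
      rw [pow_add, negpow_two_mul, mul_one]
    have hA : (Nat.fib (u (n + 1)) : ℝ) ≠ 0 := (hfibpos n).ne'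
    have hB : (Nat.fib (u (n + 1) + 2 * k * r) : ℝ) ≠ 0 := by
      have : 0 < Nat.fib (u (n + 1) + 2 * k * r) := Nat.fib_pos.mpr (by have := hge n; omega)
      exact_mod_cast this.ne'
    field_simp
    linear_combination (-1 : ℝ) * hsign
  -- pair sums
  have hpairm : ∀ m : ℕ, w m + w (m + 1) =
      (-1 : ℝ) ^ m * ((-1 : ℝ) ^ (u (m + 1)) * Nat.fib r /
        (Nat.fib (u (m + 1)) * Nat.fib (u (m + 1) + r))) := by
    intro m
    have hd := fibdiff (u (m + 1)) r (by have := hge m; omega)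
    have hu2 : u (m + 1 + 1) = u (m + 1) + r := harith _ (by omega)
    have e : w m + w (m + 1) = (-1 : ℝ) ^ m * (h m - h (m + 1)) := by
      simp only [hw]; rw [pow_succ]; ring
    rw [e]
    congr 1
    simp only [hh]
    rw [hu2]
    exact hd
  -- summability
  have habs : ∀ n : ℕ, |f n| ≤ (2/3 : ℝ) ^ n := by
    intro n
    have hA := hfibpos n
    have he : n + 1 + 2 * k = n + 2 * k + 1 := by ring
    have hB : (0:ℝ) < Nat.fib (u (n + 1 + 2 * k)) := by rw [he]; exact hfibpos (n + 2 * k)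
    have h1 : (3/2 : ℝ) ^ n ≤ Nat.fib (u (n + 1 + 2 * k)) := by
      calc (3/2 : ℝ) ^ n ≤ Nat.fib (n + 2) := fib_lb n
        _ ≤ Nat.fib (u (n + 1 + 2 * k)) := by
            rw [he]
            exact_mod_cast Nat.cast_le.mpr (Nat.fib_mono (by have := hge (n + 2 * k); omega))
    have hA1 : (1:ℝ) ≤ Nat.fib (u (n + 1)) := by
      have : 1 ≤ Nat.fib (u (n + 1)) := Nat.fib_pos.mpr (by have := hge n; omega)
      exact_mod_cast this
    have habs1 : |f n| = 1 / ((Nat.fib (u (n + 1)) : ℝ) * Nat.fib (u (n + 1 + 2 * k))) := by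
      simp only [hf]
      rw [abs_div, abs_pow, abs_neg, abs_one, one_pow, abs_of_pos (by positivity)]
    rw [habs1, div_le_iff₀ (by positivity)]
    calc (1:ℝ) = (2/3:ℝ)^n * (3/2:ℝ)^n := by rw [← mul_pow]; norm_num
      _ ≤ (2/3:ℝ)^n * (Nat.fib (u (n + 1)) * Nat.fib (u (n + 1 + 2 * k))) := by
          apply mul_le_mul_of_nonneg_left _ (by positivity)
          nlinarith
  have hsummable : Summable f := by
    apply Summable.of_abs
    apply Summable.of_nonneg_of_le (fun n => abs_nonneg _) habs
    exact summable_geometric_of_lt_one (by norm_num) (by norm_num)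
  -- partial sums
  have hpartial : ∀ N : ℕ, ∑ n ∈ range N, f n =
      C * (∑ n ∈ range (2 * k), w n - ∑ n ∈ range (2 * k), w (N + n)) := by
    intro N
    rw [Finset.sum_congr rfl fun n _ => hfw n, ← Finset.mul_sum, tele_sum w (2 * k) N]
  -- head sum
  have hA : ∑ n ∈ range (2 * k), w n = (-1 : ℝ) ^ (u 1) * Nat.fib r *
      ∑ n ∈ range k, 1 / ((Nat.fib (u (2 * n + 2)) : ℝ) * Nat.fib (u (2 * n + 1))) := by
    rw [pair_sum, Finset.mul_sum]
    apply Finset.sum_congr rfl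
    intro j _
    rw [hpairm (2 * j)]
    have hs : (-1:ℝ) ^ (u (2 * j + 1)) = (-1) ^ (u 1) := by
      rw [huu (2 * j), pow_add, show 2 * j * r = 2 * (j * r) by ring, negpow_two_mul, mul_one]
    have hu2 : u (2 * j + 2) = u (2 * j + 1) + r := harith _ (by omega)
    rw [negpow_two_mul, hs, hu2]
    ring
  -- tail tends to zero
  have htail : Filter.Tendsto (fun N => ∑ n ∈ range (2 * k), w (N + n)) atTop (nhds 0) := by
    apply squeeze_zero_norm (a := fun N => (k : ℝ) * Nat.fib r * (2/3:ℝ) ^ N)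
    · intro N
      have hps : ∑ n ∈ range (2 * k), w (N + n) =
          ∑ j ∈ range k, (w (N + 2 * j) + w (N + 2 * j + 1)) := by
        rw [pair_sum (fun i => w (N + i)) k]
        apply Finset.sum_congr rfl
        intro j _
        rw [show N + (2 * j + 1) = N + 2 * j + 1 by ring]
      rw [hps, Real.norm_eq_abs]
      have hbound : ∀ j ∈ range k, ‖w (N + 2 * j) + w (N + 2 * j + 1)‖ ≤
          (Nat.fib r : ℝ) * (2/3:ℝ) ^ N := by
        intro j _
        rw [hpairm (N + 2 * j)]
        have ha1 : (1:ℝ) ≤ Nat.fib (u (N + 2 * j + 1)) := by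
          have : 1 ≤ Nat.fib (u (N + 2 * j + 1)) :=
            Nat.fib_pos.mpr (by have := hge (N + 2 * j); omega)
          exact_mod_cast this
        have hb1 : (3/2:ℝ) ^ N ≤ Nat.fib (u (N + 2 * j + 1) + r) := by
          calc (3/2:ℝ) ^ N ≤ Nat.fib (N + 2) := fib_lb N
            _ ≤ Nat.fib (u (N + 2 * j + 1) + r) := by
                exact_mod_cast Nat.cast_le.mpr (Nat.fib_mono (by have := hge (N + 2 * j); omega))
        have hb0 : (0:ℝ) < Nat.fib (u (N + 2 * j + 1) + r) := by
          have : (0:ℝ) < (3/2:ℝ) ^ N := by positivity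
          linarith
        have habs2 : ‖(-1 : ℝ) ^ (N + 2 * j) * ((-1 : ℝ) ^ (u (N + 2 * j + 1)) * Nat.fib r /
            (Nat.fib (u (N + 2 * j + 1)) * Nat.fib (u (N + 2 * j + 1) + r)))‖ =
            (Nat.fib r : ℝ) / (Nat.fib (u (N + 2 * j + 1)) * Nat.fib (u (N + 2 * j + 1) + r)) := by
          rw [Real.norm_eq_abs, abs_mul, abs_pow, abs_neg, abs_one, one_pow, one_mul,
            abs_div, abs_mul, abs_pow, abs_neg, abs_one, one_pow, one_mul, Nat.abs_cast,
            abs_mul, Nat.abs_cast, Nat.abs_cast]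
        rw [habs2]
        have h3 : (3/2:ℝ)^N ≤ (Nat.fib (u (N + 2 * j + 1)) : ℝ) *
            Nat.fib (u (N + 2 * j + 1) + r) := by nlinarith
        calc (Nat.fib r : ℝ) /
              ((Nat.fib (u (N + 2 * j + 1)) : ℝ) * Nat.fib (u (N + 2 * j + 1) + r))
            ≤ (Nat.fib r : ℝ) / (3/2:ℝ)^N := by
              gcongr
          _ = (Nat.fib r : ℝ) * (2/3:ℝ)^N := by
              rw [div_eq_mul_inv, ← inv_pow]
              norm_num
      calc |∑ j ∈ range k, (w (N + 2 * j) + w (N + 2 * j + 1))|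
          ≤ ∑ j ∈ range k, ‖w (N + 2 * j) + w (N + 2 * j + 1)‖ := by
            simpa [Real.norm_eq_abs] using norm_sum_le (range k)
              (fun j => w (N + 2 * j) + w (N + 2 * j + 1))
        _ ≤ ∑ _j ∈ range k, (Nat.fib r : ℝ) * (2/3:ℝ) ^ N := Finset.sum_le_sum hbound
        _ = (k : ℝ) * ((Nat.fib r : ℝ) * (2/3:ℝ) ^ N) := by
            rw [Finset.sum_const, card_range, nsmul_eq_mul]
        _ = (k : ℝ) * Nat.fib r * (2/3:ℝ) ^ N := by ring
    · have := (tendsto_pow_atTop_nhds_zero_of_lt_one (by norm_num : (0:ℝ) ≤ 2/3)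
        (by norm_num : (2/3:ℝ) < 1)).const_mul ((k : ℝ) * Nat.fib r)
      simpa using this
  -- identify the limit
  have hps1 : Filter.Tendsto (fun N => ∑ n ∈ range N, f n) atTop (nhds (∑' n, f n)) :=
    hsummable.hasSum.tendsto_sum_nat
  have hps2 : Filter.Tendsto (fun N => ∑ n ∈ range N, f n) atTop
      (nhds (C * (∑ n ∈ range (2 * k), w n - 0))) := by
    simp only [hpartial]
    exact (tendsto_const_nhds.sub htail).const_mul C
  have heq : ∑' n, f n = C * (∑ n ∈ range (2 * k), w n - 0) :=
    tendsto_nhds_unique hps1 hps2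
  rw [heq, sub_zero, hA, hC]
  have hsq : (-1:ℝ) ^ (u 1) * (-1:ℝ) ^ (u 1) = 1 := by
    rw [← pow_add, show u 1 + u 1 = 2 * u 1 by ring, negpow_two_mul]
  field_simp
  ring_nf
  linear_combination ((Nat.fib r : ℝ) *
    ∑ x ∈ range k, ((Nat.fib (u (2 + x * 2)) : ℝ))⁻¹ * ((Nat.fib (u (1 + x * 2)) : ℝ))⁻¹) * hsq
end

section
/- Let (u_n)_{n≥1} be an increasing sequence of positive integers. Then ∑_{n=1}^∞ (-1)^{u_n − n} / (F_{u_n} · Φ^{u_n}) = ∑_{n=1}^∞ (-1)^{u_{2n-1}+1} · F_{u_{2n} − u_{2n-1}} / (F_{u_{2n}} · F_{u_{2n-1}}). -/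
open Filter Finset Topology

open Real goldenRatio in
/-- `psi^(n+1) = F_{n+1} psi + F_n`. -/
lemma psi_pow (n : ℕ) : (ψ : ℝ) ^ (n + 1) = (Nat.fib (n + 1) : ℝ) * ψ + Nat.fib n := by
  induction n with
  | zero => simp
  | succ n ih =>
    have h2 : (ψ : ℝ) ^ (n + 2) = ψ ^ (n + 1) * ψ := by ring
    rw [h2, ih]
    have hsq : (ψ : ℝ) ^ 2 = ψ + 1 := goldenConj_sq
    have h3 : ((Nat.fib (n + 1) : ℝ) * ψ + Nat.fib n) * ψ
        = (Nat.fib (n + 1) : ℝ) * (ψ ^ 2) + Nat.fib n * ψ := by ring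
    rw [h3, hsq, Nat.fib_add_two]
    push_cast
    ring

open Real goldenRatio in
/-- Key identity: `(-1)^(k+1) / (F_(k+1) φ^(k+1)) = ψ + F_k / F_(k+1)`. -/
lemma key_identity (k : ℕ) :
    (-1 : ℝ) ^ (k + 1) / ((Nat.fib (k + 1) : ℝ) * φ ^ (k + 1))
      = ψ + (Nat.fib k : ℝ) / Nat.fib (k + 1) := by
  have hfib : (0 : ℝ) < Nat.fib (k + 1) := by
    exact_mod_cast Nat.fib_pos.2 (Nat.succ_pos k)
  have hphi : (0 : ℝ) < φ ^ (k + 1) := pow_pos goldenRatio_pos _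
  have hpsipow := psi_pow k
  have hmul : (φ : ℝ) ^ (k + 1) * ψ ^ (k + 1) = (-1) ^ (k + 1) := by
    rw [← mul_pow, goldenRatio_mul_goldenConj]
  rw [div_eq_iff (by positivity : ((Nat.fib (k + 1) : ℝ) * φ ^ (k + 1)) ≠ 0)]
  have h1 : (ψ + (Nat.fib k : ℝ) / Nat.fib (k + 1)) * ((Nat.fib (k + 1) : ℝ) * φ ^ (k + 1))
      = (ψ * Nat.fib (k + 1) + Nat.fib k) * φ ^ (k + 1) := by
    field_simp
  have h2 : (ψ * (Nat.fib (k + 1) : ℝ) + Nat.fib k) = ψ ^ (k + 1) := by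
    rw [hpsipow]; ring
  rw [h1, h2, mul_comm ((ψ : ℝ) ^ (k + 1)), hmul]

/-- d'Ocagne-type identity (integer form). -/
lemma docagne (d : ℕ) : ∀ m : ℕ,
    (Nat.fib (m + d) : ℤ) * Nat.fib (m + 1) - Nat.fib m * Nat.fib (m + 1 + d)
      = (-1) ^ m * Nat.fib d := by
  intro m
  induction m with
  | zero => simp
  | succ m ih =>
    have e2 : m + 1 + d = (m + d) + 1 := by ring
    have h1 : (Nat.fib (m + 2) : ℤ) = Nat.fib m + Nat.fib (m + 1) := by
      rw [Nat.fib_add_two]; push_cast; ring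
    have h2 : (Nat.fib (m + d + 2) : ℤ) = Nat.fib (m + d) + Nat.fib (m + d + 1) := by
      rw [Nat.fib_add_two]; push_cast; ring
    rw [show m + 1 + d = m + d + 1 from e2, show m + 1 + 1 = m + 2 from rfl,
      show m + 2 + d = m + d + 2 by ring, h1, h2]
    have h3 : (Nat.fib (m + d + 1) : ℤ) * (Nat.fib m + Nat.fib (m + 1))
        - Nat.fib (m + 1) * (Nat.fib (m + d) + Nat.fib (m + d + 1))
        = -((Nat.fib (m + d) : ℤ) * Nat.fib (m + 1) - Nat.fib m * Nat.fib (m + 1 + d)) := by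
      rw [e2]; ring
    rw [h3, ih]
    ring

open Real goldenRatio in
/-- The pairwise identity. -/
lemma pair_identity (a b : ℕ) (N : ℤ) (ha : 1 ≤ a) (hab : a < b) :
    (-1 : ℝ) ^ ((a : ℤ) - (2 * N + 1)) / ((Nat.fib a : ℝ) * φ ^ a)
      + (-1 : ℝ) ^ ((b : ℤ) - (2 * N + 2)) / ((Nat.fib b : ℝ) * φ ^ b)
      = (-1 : ℝ) ^ (a + 1) * ((Nat.fib (b - a) : ℝ) / ((Nat.fib b : ℝ) * Nat.fib a)) := by
  have hz1 : (-1 : ℝ) ^ ((a : ℤ) - (2 * N + 1)) = -(-1 : ℝ) ^ a := by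
    rw [zpow_sub₀ (by norm_num : (-1:ℝ) ≠ 0), zpow_natCast]
    have h : (-1 : ℝ) ^ (2 * N + 1) = -1 := by
      rw [zpow_add₀ (by norm_num : (-1:ℝ) ≠ 0), zpow_one, zpow_mul]
      norm_num
    rw [h]; ring
  have hz2 : (-1 : ℝ) ^ ((b : ℤ) - (2 * N + 2)) = (-1 : ℝ) ^ b := by
    rw [zpow_sub₀ (by norm_num : (-1:ℝ) ≠ 0), zpow_natCast]
    have h : (-1 : ℝ) ^ (2 * N + 2) = 1 := by
      rw [show 2 * N + 2 = 2 * (N + 1) by ring, zpow_mul]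
      norm_num
    rw [h]; ring
  obtain ⟨m, rfl⟩ : ∃ m, a = m + 1 := ⟨a - 1, by omega⟩
  obtain ⟨d, rfl⟩ : ∃ d, b = m + 1 + d := ⟨b - (m + 1), by omega⟩
  have hd1 : m + 1 + d = (m + d) + 1 := by ring
  rw [hz1, hz2, hd1, neg_div, key_identity m, key_identity (m + d)]
  have hfa : (0 : ℝ) < Nat.fib (m + 1) := by exact_mod_cast Nat.fib_pos.2 (by omega)
  have hfb : (0 : ℝ) < Nat.fib (m + d + 1) := by exact_mod_cast Nat.fib_pos.2 (by omega)
  have hdoc : (Nat.fib (m + d) : ℝ) * Nat.fib (m + 1) - Nat.fib m * Nat.fib (m + d + 1)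
      = (-1) ^ m * Nat.fib d := by
    have := docagne d m
    rw [show m + 1 + d = m + d + 1 from hd1] at this
    exact_mod_cast this
  have hsub : m + d + 1 - (m + 1) = d := by omega
  have hsign : (-1 : ℝ) ^ (m + 1 + 1) = (-1) ^ m := by
    rw [pow_succ, pow_succ]; ring
  rw [hsub, hsign]
  field_simp
  linear_combination 2 * hdoc

open Real goldenRatio in
/-- Absolute value of the terms. -/
lemma term_abs (k : ℕ) (hk : 1 ≤ k) (z : ℤ) :
    |(-1 : ℝ) ^ z / ((Nat.fib k : ℝ) * φ ^ k)| = 1 / ((Nat.fib k : ℝ) * φ ^ k) := by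
  have hfib : (0 : ℝ) < Nat.fib k := by exact_mod_cast Nat.fib_pos.2 (by omega)
  have hden : (0 : ℝ) < (Nat.fib k : ℝ) * φ ^ k := by positivity
  have h1 : |(-1 : ℝ) ^ z| = 1 := by
    rcases Int.even_or_odd z with h | h
    · rw [h.neg_one_zpow]; norm_num
    · rw [h.neg_one_zpow]; norm_num
  rw [abs_div, abs_of_pos hden, h1]

lemma Phi_eq : Phi = Real.goldenRatio := rfl

open Real goldenRatio in
/-- Let `(u_n)_{n≥1}` be an increasing sequence of positive integers.
Then `∑_{n=1}^∞ (-1)^{u_n - n} / (F_{u_n} Φ^{u_n})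
= ∑_{n=1}^∞ (-1)^{u_{2n-1}+1} F_{u_{2n} - u_{2n-1}} / (F_{u_{2n}} F_{u_{2n-1}})`. -/
theorem statement15 (u : ℕ → ℕ) (hupos : ∀ n, 1 ≤ n → 1 ≤ u n)
    (humono : ∀ n, 1 ≤ n → u n < u (n + 1)) :
    ∑' n : ℕ, (-1 : ℝ) ^ ((u (n + 1) : ℤ) - ((n : ℤ) + 1)) /
        ((Nat.fib (u (n + 1)) : ℝ) * Phi ^ (u (n + 1))) =
      ∑' n : ℕ, (-1 : ℝ) ^ (u (2 * n + 1) + 1) *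
        ((Nat.fib (u (2 * n + 2) - u (2 * n + 1)) : ℝ) /
          ((Nat.fib (u (2 * n + 2)) : ℝ) * (Nat.fib (u (2 * n + 1)) : ℝ))) := by
  have hu : ∀ n : ℕ, n + 1 ≤ u (n + 1) := by
    intro n
    induction n with
    | zero => exact hupos 1 le_rfl
    | succ n ih =>
      have := humono (n + 1) (by omega)
      omega
  set f : ℕ → ℝ := fun n => (-1 : ℝ) ^ ((u (n + 1) : ℤ) - ((n : ℤ) + 1)) /
      ((Nat.fib (u (n + 1)) : ℝ) * Phi ^ (u (n + 1))) with hf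
  have hbound : ∀ n, |f n| ≤ (goldenRatio⁻¹) ^ (n + 1) := by
    intro n
    have hk := hu n
    rw [hf]
    simp only [Phi_eq]
    rw [term_abs _ (by omega) _]
    have hf1 : (1 : ℝ) ≤ Nat.fib (u (n + 1)) := by
      exact_mod_cast Nat.fib_pos.2 (by omega)
    have hφ : (1 : ℝ) ≤ goldenRatio := le_of_lt one_lt_goldenRatio
    have hp : goldenRatio ^ (n + 1) ≤ goldenRatio ^ (u (n + 1)) := by
      exact pow_le_pow_right₀ hφ hk
    have hq : goldenRatio ^ (n + 1) ≤ (Nat.fib (u (n + 1)) : ℝ) * goldenRatio ^ (u (n + 1)) := by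
      calc goldenRatio ^ (n + 1) ≤ goldenRatio ^ (u (n + 1)) := hp
        _ ≤ (Nat.fib (u (n + 1)) : ℝ) * goldenRatio ^ (u (n + 1)) := by
            nlinarith [pow_pos goldenRatio_pos (u (n + 1))]
    rw [inv_pow, ← one_div]
    exact one_div_le_one_div_of_le (by positivity) hq
  have hsum : Summable f := by
    apply Summable.of_abs
    apply Summable.of_nonneg_of_le (fun n => abs_nonneg _) hbound
    have h0 : (0 : ℝ) ≤ goldenRatio⁻¹ := by positivity
    have h1 : goldenRatio⁻¹ < 1 := by
      rw [inv_lt_one_iff₀]; right; exact one_lt_goldenRatio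
    have := (summable_geometric_of_lt_one h0 h1).mul_right goldenRatio⁻¹
    simpa [pow_succ] using this
  have heven : Summable (fun k => f (2 * k)) :=
    hsum.comp_injective (fun a b h => by omega)
  have hodd : Summable (fun k => f (2 * k + 1)) :=
    hsum.comp_injective (fun a b h => by omega)
  calc ∑' n, f n = ∑' n, (f (2 * n) + f (2 * n + 1)) := by
        rw [Summable.tsum_add heven hodd, tsum_even_add_odd heven hodd]
    _ = ∑' n : ℕ, (-1 : ℝ) ^ (u (2 * n + 1) + 1) *
        ((Nat.fib (u (2 * n + 2) - u (2 * n + 1)) : ℝ) /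
          ((Nat.fib (u (2 * n + 2)) : ℝ) * (Nat.fib (u (2 * n + 1)) : ℝ))) := by
        refine tsum_congr fun n => ?_
        have ha : 1 ≤ u (2 * n + 1) := hupos _ (by omega)
        have hab : u (2 * n + 1) < u (2 * n + 2) := humono _ (by omega)
        have h := pair_identity (u (2 * n + 1)) (u (2 * n + 2)) (n : ℤ) ha hab
        rw [hf]
        simp only [Phi_eq]
        have e1 : ((2 * n : ℕ) : ℤ) + 1 = 2 * (n : ℤ) + 1 := by push_cast; ring
        have e2 : ((2 * n + 1 : ℕ) : ℤ) + 1 = 2 * (n : ℤ) + 2 := by push_cast; ring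
        have e3 : 2 * n + 1 + 1 = 2 * n + 2 := rfl
        rw [e1, e2, e3]
        exact h
end
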